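/- Let H be a complex Hilbert space, c a unit vector in H, and r a real number with 0 ≤ r < 1. Let L be a closed subspace of H. Then the following are equivalent: (i) B ∩ L ∩ h(c, r) = ∅; (ii) L ∩ closedBall(c, r) = ∅; (iii) infDist(c, L) > r; where B = { x ∈ H | ‖x‖ ≤ 1 } is the closed unit ball, closedBall(c, r) = { x ∈ H | ‖x − c‖ ≤ r }, h(c, r) = { x ∈ H | re⟪c, x⟫ ≥ √(1 − r²) }, and infDist(c, L) is the infimum of ‖c − y‖ over y ∈ L. -/

import Mathlib

set_option maxHeartbeats 1000000


open scoped InnerProductSpace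

/-- For a unit vector `c`, `0 ≤ r < 1` and a closed subspace `L` of a complex
Hilbert space, the following are equivalent: (i) the unit ball meets
`L ∩ h(c,r)` in the empty set (with `h(c,r) = {x | re⟪c, x⟫ ≥ √(1 - r²)}`);
(ii) `L ∩ closedBall c r = ∅`; (iii) `infDist c L > r`. -/
theorem halfspace_closedBall_infDist_tfae
    {H : Type*} [NormedAddCommGroup H] [InnerProductSpace ℂ H] [CompleteSpace H]
    (c : H) (hc : ‖c‖ = 1) (r : ℝ) (hr0 : 0 ≤ r) (hr1 : r < 1)
    (L : Submodule ℂ H) (hL : IsClosed (L : Set H)) :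
    ({x : H | ‖x‖ ≤ 1} ∩ (L : Set H)
        ∩ {x : H | Real.sqrt (1 - r ^ 2) ≤ (⟪c, x⟫_ℂ).re} = ∅ ↔
      (L : Set H) ∩ Metric.closedBall c r = ∅) ∧
    ((L : Set H) ∩ Metric.closedBall c r = ∅ ↔
      r < Metric.infDist c (L : Set H)) := by
  set s : ℝ := Real.sqrt (1 - r ^ 2) with hs_def
  have h1r : (0:ℝ) < 1 - r ^ 2 := by nlinarith
  have hs2 : s ^ 2 = 1 - r ^ 2 := Real.sq_sqrt h1r.le
  have hs0 : 0 < s := Real.sqrt_pos.2 h1r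
  clear_value s
  haveI : CompleteSpace L := hL.completeSpace_coe
  -- the orthogonal projection of `c` onto `L`
  set v : H := (L.orthogonalProjectionOnto c : H) with hv_def
  have hvL : v ∈ L := (L.orthogonalProjectionOnto c).2
  clear_value v
  have hmin : ∀ y ∈ L, ‖c - v‖ ≤ ‖c - y‖ := by
    intro y hy
    have horth : ⟪c - v, v - y⟫_ℂ = 0 := by
      rw [hv_def]
      rw [← Submodule.starProjection_apply]
      exact Submodule.starProjection_inner_eq_zero c _
        (L.sub_mem (L.orthogonalProjectionOnto c).2 hy)
    have hpy := norm_add_sq_eq_norm_sq_add_norm_sq_of_inner_eq_zero (c - v) (v - y) horth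
    have hrw : c - v + (v - y) = c - y := by abel
    rw [hrw] at hpy
    have h2 : ‖c - v‖ ^ 2 ≤ ‖c - y‖ ^ 2 := by nlinarith [sq_nonneg ‖v - y‖]
    nlinarith [norm_nonneg (c - v), norm_nonneg (c - y)]
  have hne : (L : Set H).Nonempty := ⟨0, L.zero_mem⟩
  have hinf : Metric.infDist c (L : Set H) = ‖c - v‖ := by
    refine le_antisymm ?_ ?_
    · simpa [dist_eq_norm] using Metric.infDist_le_dist_of_mem hvL
    · by_contra h
      push_neg at h
      obtain ⟨y, hyL, hyd⟩ := (Metric.infDist_lt_iff hne).1 h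
      rw [dist_eq_norm] at hyd
      exact absurd hyd (not_lt.2 (hmin y hyL))
  have part2 : (L : Set H) ∩ Metric.closedBall c r = ∅ ↔
      r < Metric.infDist c (L : Set H) := by
    constructor
    · intro h
      rw [hinf]
      by_contra hle
      push_neg at hle
      have hvball : v ∈ Metric.closedBall c r := by
        rw [Metric.mem_closedBall, dist_comm, dist_eq_norm]
        exact hle
      exact Set.eq_empty_iff_forall_notMem.1 h v ⟨hvL, hvball⟩
    · intro h
      rw [Set.eq_empty_iff_forall_notMem]
      rintro y ⟨hyL, hyb⟩
      have := Metric.infDist_le_dist_of_mem (x := c) hyL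
      rw [Metric.mem_closedBall, dist_comm] at hyb
      linarith
  refine ⟨?_, part2⟩
  rw [Set.eq_empty_iff_forall_notMem, Set.eq_empty_iff_forall_notMem]
  constructor
  · -- (i) → (ii)
    intro h
    rintro y ⟨hyL, hyb⟩
    rw [Metric.mem_closedBall, dist_eq_norm] at hyb
    set t : ℝ := ‖y‖ with ht_def
    have hy0 : y ≠ 0 := by
      rintro rfl
      rw [zero_sub, norm_neg, hc] at hyb
      linarith
    have ht0 : 0 < t := norm_pos_iff.2 hy0
    clear_value t
    have hsq : ‖y - c‖ ^ 2 = t ^ 2 - 2 * (⟪c, y⟫_ℂ).re + 1 := by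
      have h0 := @norm_sub_sq ℂ _ _ _ _ y c
      rw [inner_re_symm] at h0
      simp only [RCLike.re_to_complex] at h0
      rw [ht_def, h0, hc]; ring
    have hre : (t ^ 2 + 1 - r ^ 2) / 2 ≤ (⟪c, y⟫_ℂ).re := by
      nlinarith [sq_nonneg ‖y - c‖, norm_nonneg (y - c)]
    -- take x = y / ‖y‖
    refine h ((t⁻¹ : ℂ) • y) ⟨⟨?_, L.smul_mem _ hyL⟩, ?_⟩
    · show ‖(t⁻¹ : ℂ) • y‖ ≤ 1
      rw [norm_smul, norm_inv, Complex.norm_real, Real.norm_eq_abs,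
        abs_of_pos ht0, ← ht_def, inv_mul_cancel₀ ht0.ne']
    · show s ≤ (⟪c, (t⁻¹ : ℂ) • y⟫_ℂ).re
      rw [inner_smul_right]
      have heq : ((t⁻¹ : ℂ) * ⟪c, y⟫_ℂ).re = t⁻¹ * (⟪c, y⟫_ℂ).re := by
        rw [← Complex.ofReal_inv, Complex.re_ofReal_mul]
      rw [heq, inv_mul_eq_div, le_div_iff₀ ht0]
      nlinarith [sq_nonneg (t - s)]
  · -- (ii) → (i)
    intro h
    rintro x ⟨⟨hx1, hxL⟩, hxs⟩
    have hxs : s ≤ (⟪c, x⟫_ℂ).re := hxs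
    have hx1 : ‖x‖ ≤ 1 := hx1
    set u : ℝ := (⟪c, x⟫_ℂ).re with hu_def
    have hu0 : 0 < u := lt_of_lt_of_le hs0 hxs
    have hx0 : x ≠ 0 := by
      rintro rfl
      simp only [inner_zero_right, Complex.zero_re] at hu_def
      rw [hu_def] at hu0; exact lt_irrefl 0 hu0
    set t : ℝ := ‖x‖ with ht_def
    have ht0 : 0 < t := norm_pos_iff.2 hx0
    set a : ℝ := u / t ^ 2 with ha_def
    clear_value a
    clear_value t
    clear_value u
    refine h ((a : ℂ) • x) ⟨L.smul_mem _ hxL, ?_⟩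
    rw [Metric.mem_closedBall, dist_eq_norm]
    have hnormy : ‖(a : ℂ) • x‖ = |a| * t := by
      rw [norm_smul, Complex.norm_real, Real.norm_eq_abs, ← ht_def]
    have hrey : (⟪c, (a : ℂ) • x⟫_ℂ).re = a * u := by
      rw [inner_smul_right, Complex.re_ofReal_mul, ← hu_def]
    have hsq : ‖(a : ℂ) • x - c‖ ^ 2 = a ^ 2 * t ^ 2 - 2 * (a * u) + 1 := by
      have h0 := @norm_sub_sq ℂ _ _ _ _ ((a : ℂ) • x) c
      rw [inner_re_symm] at h0
      simp only [RCLike.re_to_complex] at h0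
      rw [h0, hrey, hc, hnormy, mul_pow, sq_abs]; ring
    have hval : ‖(a : ℂ) • x - c‖ ^ 2 = 1 - u ^ 2 / t ^ 2 := by
      rw [hsq, ha_def]
      field_simp
      ring
    have hle : ‖(a : ℂ) • x - c‖ ^ 2 ≤ r ^ 2 := by
      rw [hval]
      have h1 : s ^ 2 ≤ u ^ 2 := by nlinarith
      have ht1 : t ^ 2 ≤ 1 := by nlinarith
      have h2 : u ^ 2 ≤ u ^ 2 / t ^ 2 := by
        rw [le_div_iff₀ (by positivity)]
        nlinarith [mul_nonneg (sq_nonneg u) (sub_nonneg.2 ht1)]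
      linarith
    have := Real.sqrt_le_sqrt hle
    rwa [Real.sqrt_sq (norm_nonneg _), Real.sqrt_sq hr0] at this
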